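/- arXiv:1806.04817 — 3 statements merged into one kernel-verified Lean document; each statement's English description precedes it below -/
import Mathlib

section
/- For m ≥ 1 and b ∈ ℂ with positive real part condition as needed, the iterated integral operator (∫₀^t · t dt)^{m−1} applied to sin(bt) satisfies ℒ[(∫₀^t · t dt)^{m−1} sin(bt)](s) = 2^{m−1}(m−1)!·b/(s² + b²)^m for Re(s) > |Im b|. -/
open MeasureTheory Set Filter Complex intervalIntegral

/-- The iterated weighted integral operator `g ↦ (∫₀^t g(τ) τ dτ)`, iterated `n` times. -/
noncomputable def iterWeightedInt : ℕ → (ℝ → ℂ) → (ℝ → ℂ)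
  | 0, g => g
  | n + 1, g => fun t => ∫ τ in (0 : ℝ)..t, iterWeightedInt n g τ * τ

lemma iter_cont (b : ℂ) (n : ℕ) :
    Continuous (iterWeightedInt n (fun t => Complex.sin (b * t))) := by
  induction n with
  | zero =>
    exact Complex.continuous_sin.comp (continuous_const.mul Complex.continuous_ofReal)
  | succ n ih =>
    show Continuous fun t => ∫ τ in (0:ℝ)..t, iterWeightedInt n _ τ * τ
    exact intervalIntegral.continuous_primitive
      (fun a c => ((ih.mul Complex.continuous_ofReal).intervalIntegrable a c)) 0

lemma norm_sin_le (b : ℂ) (t : ℝ) (ht : 0 ≤ t) :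
    ‖Complex.sin (b * t)‖ ≤ Real.exp (|b.im| * t) := by
  rw [Complex.sin]
  have h1 : ‖Complex.exp (-(b * t) * Complex.I)‖ = Real.exp (b.im * t) := by
    rw [Complex.norm_exp]; congr 1
    simp [Complex.mul_re, Complex.mul_im]
  have h2 : ‖Complex.exp ((b * t) * Complex.I)‖ = Real.exp (-(b.im * t)) := by
    rw [Complex.norm_exp]; congr 1
    simp [Complex.mul_re, Complex.mul_im]
  calc ‖(Complex.exp (-(b*t) * Complex.I) - Complex.exp ((b*t) * Complex.I)) * Complex.I / 2‖
      = ‖Complex.exp (-(b*t) * Complex.I) - Complex.exp ((b*t) * Complex.I)‖ / 2 := by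
        simp [norm_div, norm_mul]
    _ ≤ (Real.exp (b.im * t) + Real.exp (-(b.im * t))) / 2 := by
        rw [← h1, ← h2]
        have := norm_sub_le (Complex.exp (-(b*t) * Complex.I)) (Complex.exp ((b*t) * Complex.I))
        linarith
    _ ≤ Real.exp (|b.im| * t) := by
        have e1 : b.im * t ≤ |b.im| * t := mul_le_mul_of_nonneg_right (le_abs_self _) ht
        have e2 : -(b.im * t) ≤ |b.im| * t := by
          rw [neg_mul_eq_neg_mul]
          exact mul_le_mul_of_nonneg_right (neg_le_abs _) ht
        nlinarith [Real.exp_le_exp.2 e1, Real.exp_le_exp.2 e2]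

lemma iter_growth (b : ℂ) (n : ℕ) (t : ℝ) (ht : 0 ≤ t) :
    ‖iterWeightedInt n (fun t => Complex.sin (b * t)) t‖ ≤
      (1 + t) ^ (2 * n) * Real.exp (|b.im| * t) := by
  induction n generalizing t with
  | zero => simpa [iterWeightedInt] using norm_sin_le b t ht
  | succ n ih =>
    show ‖∫ τ in (0:ℝ)..t, iterWeightedInt n _ τ * τ‖ ≤ _
    have key : ∀ x ∈ Set.uIoc (0:ℝ) t,
        ‖iterWeightedInt n (fun t => Complex.sin (b * t)) x * (x:ℂ)‖ ≤
          (1 + t) ^ (2 * n + 1) * Real.exp (|b.im| * t) := by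
      intro x hx
      rw [Set.uIoc_of_le ht] at hx
      obtain ⟨hx0, hxt⟩ := hx
      have hx0' := hx0.le
      rw [norm_mul, Complex.norm_real, Real.norm_eq_abs, _root_.abs_of_nonneg hx0']
      have hb1 : ‖iterWeightedInt n (fun t => Complex.sin (b * t)) x‖ ≤
          (1 + t) ^ (2 * n) * Real.exp (|b.im| * t) := by
        refine (ih x hx0').trans ?_
        gcongr <;> linarith [abs_nonneg b.im, mul_le_mul_of_nonneg_left hxt (abs_nonneg b.im)]
      calc ‖iterWeightedInt n (fun t => Complex.sin (b * t)) x‖ * x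
          ≤ ((1 + t) ^ (2 * n) * Real.exp (|b.im| * t)) * (1 + t) := by
            have h1t : (0:ℝ) ≤ 1 + t := by linarith
            exact mul_le_mul hb1 (by linarith) hx0' (by positivity)
        _ = (1 + t) ^ (2 * n + 1) * Real.exp (|b.im| * t) := by ring
    have := intervalIntegral.norm_integral_le_of_norm_le_const key
    rw [sub_zero, _root_.abs_of_nonneg ht] at this
    refine this.trans ?_
    have h1t : (0:ℝ) ≤ 1 + t := by linarith
    calc (1 + t) ^ (2 * n + 1) * Real.exp (|b.im| * t) * t
        ≤ (1 + t) ^ (2 * n + 1) * Real.exp (|b.im| * t) * (1 + t) := by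
          gcongr; linarith
      _ = (1 + t) ^ (2 * (n + 1)) * Real.exp (|b.im| * t) := by ring

lemma aux_tendsto (m : ℕ) {d : ℝ} (hd : 0 < d) :
    Tendsto (fun t : ℝ => (1 + t) ^ m * Real.exp (-d * t)) atTop (nhds 0) := by
  have h0 : Tendsto (fun x : ℝ => x ^ m * Real.exp (-x)) atTop (nhds 0) :=
    Real.tendsto_pow_mul_exp_neg_atTop_nhds_zero m
  have h1 : Tendsto (fun t : ℝ => d * (1 + t)) atTop atTop :=
    (tendsto_atTop_add_const_left _ 1 tendsto_id).const_mul_atTop hd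
  have h2 := (h0.comp h1).mul_const (Real.exp d / d ^ m)
  rw [zero_mul] at h2
  refine h2.congr (fun t => ?_)
  simp only [Function.comp_apply]
  rw [show -(d * (1+t)) = -d * t + -d by ring, Real.exp_add, mul_pow]
  rw [Real.exp_neg d]
  field_simp

lemma aux_integrable (m : ℕ) {d : ℝ} (hd : 0 < d) :
    IntegrableOn (fun t : ℝ => (1 + t) ^ m * Real.exp (-d * t)) (Set.Ioi 0) := by
  refine integrable_of_isBigO_exp_neg (half_pos hd) ?_ ?_
  · exact (((continuous_const.add continuous_id).pow m).mul
      (Real.continuous_exp.comp (continuous_const.mul continuous_id))).continuousOn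
  · rw [Asymptotics.isBigO_iff]
    refine ⟨1, ?_⟩
    have h := aux_tendsto m (half_pos hd)
    filter_upwards [h.eventually (eventually_le_nhds (by norm_num : (0:ℝ) < 1)), eventually_ge_atTop (0:ℝ)] with t ht ht0
    have he : Real.exp (-d * t) = Real.exp (-(d/2) * t) * Real.exp (-(d/2)*t) := by
      rw [← Real.exp_add]; ring_nf
    rw [Real.norm_eq_abs, Real.norm_eq_abs, _root_.abs_of_nonneg (by positivity),
      _root_.abs_of_nonneg (Real.exp_pos _).le, he, ← mul_assoc, one_mul]
    have : (1 + t) ^ m * Real.exp (-(d/2) * t) ≤ 1 := ht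
    nlinarith [Real.exp_pos (-(d/2)*t)]

lemma norm_cexp_neg_mul (c : ℂ) (t : ℝ) : ‖Complex.exp (-c * t)‖ = Real.exp (-c.re * t) := by
  rw [Complex.norm_exp]
  congr 1
  simp [Complex.mul_re]

lemma hasDerivAt_cexp_neg_mul (c : ℂ) (t : ℝ) :
    HasDerivAt (fun t : ℝ => Complex.exp (-c * t)) (-c * Complex.exp (-c * t)) t := by
  have h1 : HasDerivAt (fun t : ℝ => -c * (t : ℂ)) (-c) t := by
    simpa using (Complex.ofRealCLM.hasDerivAt (x := t)).const_mul (-c)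
  simpa [mul_comm] using h1.cexp

lemma integrableOn_cexp_neg_mul {c : ℂ} (hc : 0 < c.re) :
    IntegrableOn (fun t : ℝ => Complex.exp (-c * t)) (Set.Ioi 0) := by
  refine (Integrable.mono' (g := fun t : ℝ => Real.exp (-c.re * t))
    ((exp_neg_integrableOn_Ioi 0 hc)) ?_ ?_)
  · exact (Complex.continuous_exp.comp (continuous_const.mul Complex.continuous_ofReal)).aestronglyMeasurable
  · exact Filter.Eventually.of_forall fun t => (norm_cexp_neg_mul c t).le

lemma tendsto_cexp_neg_mul {c : ℂ} (hc : 0 < c.re) :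
    Tendsto (fun t : ℝ => Complex.exp (-c * t)) atTop (nhds 0) := by
  rw [tendsto_zero_iff_norm_tendsto_zero]
  simp only [norm_cexp_neg_mul]
  have : Tendsto (fun t : ℝ => -c.re * t) atTop atBot :=
    tendsto_id.const_mul_atTop_of_neg (neg_neg_iff_pos.2 hc)
  exact Real.tendsto_exp_atBot.comp this

lemma integral_cexp_neg_mul {c : ℂ} (hc : 0 < c.re) :
    ∫ t in Set.Ioi (0:ℝ), Complex.exp (-c * t) = 1 / c := by
  have hc0 : c ≠ 0 := fun h => by simp [h] at hc
  have := integral_Ioi_of_hasDerivAt_of_tendsto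
    (f := fun t : ℝ => -Complex.exp (-c * t) / c)
    (f' := fun t : ℝ => Complex.exp (-c * t)) (a := 0) (m := 0)
    ?_ ?_ ?_ ?_
  · rw [this]; simp; ring
  · exact (((Complex.continuous_exp.comp (continuous_const.mul
      Complex.continuous_ofReal)).neg.div_const c).continuousWithinAt)
  · intro t _
    have := ((hasDerivAt_cexp_neg_mul c t).neg).div_const c
    refine this.congr_deriv ?_
    rw [neg_mul, neg_neg, mul_div_cancel_left₀ _ hc0]
  · exact integrableOn_cexp_neg_mul hc
  · have := (tendsto_cexp_neg_mul hc).neg.div_const c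
    simpa using this

lemma iter_integrable (b : ℂ) (n j : ℕ) {s : ℂ} (hs : |b.im| < s.re) :
    IntegrableOn (fun t : ℝ => Complex.exp (-s * t) *
      ((t:ℂ)^j * iterWeightedInt n (fun t => Complex.sin (b * t)) t)) (Set.Ioi 0) := by
  have hd : 0 < s.re - |b.im| := by linarith
  refine Integrable.mono' (aux_integrable (2*n + j) hd) ?_ ?_
  · exact ((Complex.continuous_exp.comp (continuous_const.mul Complex.continuous_ofReal)).mul
      ((Complex.continuous_ofReal.pow j).mul (iter_cont b n))).aestronglyMeasurable
  · rw [ae_restrict_iff' measurableSet_Ioi]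
    refine Filter.Eventually.of_forall fun t ht => ?_
    have ht0 : (0:ℝ) ≤ t := (le_of_lt ht)
    rw [norm_mul, norm_mul, norm_cexp_neg_mul, norm_pow, Complex.norm_real,
      Real.norm_eq_abs, _root_.abs_of_nonneg ht0]
    have h1 : t ^ j ≤ (1 + t) ^ j := by gcongr; linarith
    have h2 := iter_growth b n t ht0
    have hexp : Real.exp (-s.re * t) * Real.exp (|b.im| * t) =
        Real.exp (-(s.re - |b.im|) * t) := by rw [← Real.exp_add]; ring_nf
    calc Real.exp (-s.re * t) * (t ^ j * ‖iterWeightedInt n (fun t => Complex.sin (b*t)) t‖)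
        ≤ Real.exp (-s.re * t) * ((1+t) ^ j * ((1 + t) ^ (2 * n) * Real.exp (|b.im| * t))) := by
          have := Real.exp_pos (-s.re * t)
          gcongr
      _ = (1 + t) ^ (2*n+j) * (Real.exp (-s.re * t) * Real.exp (|b.im| * t)) := by ring
      _ = (1 + t) ^ (2*n+j) * Real.exp (-(s.re - |b.im|) * t) := by rw [hexp]

lemma laplace_sin (b : ℂ) {s : ℂ} (hs : |b.im| < s.re) :
    ∫ t in Set.Ioi (0:ℝ), Complex.exp (-s * t) * Complex.sin (b * t) = b / (s^2 + b^2) := by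
  have h1 : 0 < (s + b * Complex.I).re := by
    simp only [Complex.add_re, Complex.mul_re, Complex.I_re, Complex.I_im, mul_zero, mul_one]
    linarith [le_abs_self b.im, neg_abs_le b.im]
  have h2 : 0 < (s - b * Complex.I).re := by
    simp only [Complex.sub_re, Complex.mul_re, Complex.I_re, Complex.I_im, mul_zero, mul_one]
    linarith [le_abs_self b.im, neg_abs_le b.im]
  have h1ne : s + b * Complex.I ≠ 0 := fun h => by rw [h] at h1; simp at h1
  have h2ne : s - b * Complex.I ≠ 0 := fun h => by rw [h] at h2; simp at h2
  have hfac : (s + b * Complex.I) * (s - b * Complex.I) = s^2 + b^2 := by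
    linear_combination (-(b:ℂ)^2) * Complex.I_sq
  have hne3 : s^2 + b^2 ≠ 0 := by rw [← hfac]; exact mul_ne_zero h1ne h2ne
  have key : ∀ t : ℝ, Complex.exp (-s * t) * Complex.sin (b * t) =
      Complex.I / 2 * (Complex.exp (-(s + b * Complex.I) * t) -
        Complex.exp (-(s - b * Complex.I) * t)) := by
    intro t
    rw [Complex.sin,
      show -(s + b * Complex.I) * (t:ℂ) = -s * t + -(b * t) * Complex.I by push_cast; ring,
      show -(s - b * Complex.I) * (t:ℂ) = -s * t + (b * t) * Complex.I by push_cast; ring,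
      Complex.exp_add, Complex.exp_add]
    ring
  simp_rw [key]
  rw [MeasureTheory.integral_const_mul, integral_sub (integrableOn_cexp_neg_mul h1) (integrableOn_cexp_neg_mul h2),
    integral_cexp_neg_mul h1, integral_cexp_neg_mul h2,
    div_sub_div _ _ h1ne h2ne, hfac, ← mul_div_assoc]
  congr 1
  linear_combination (-b) * Complex.I_sq

lemma sq_add_sq_ne_zero (b : ℂ) {s : ℂ} (hs : |b.im| < s.re) : s^2 + b^2 ≠ 0 := by
  have h1 : 0 < (s + b * Complex.I).re := by
    simp only [Complex.add_re, Complex.mul_re, Complex.I_re, Complex.I_im, mul_zero, mul_one]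
    linarith [le_abs_self b.im, neg_abs_le b.im]
  have h2 : 0 < (s - b * Complex.I).re := by
    simp only [Complex.sub_re, Complex.mul_re, Complex.I_re, Complex.I_im, mul_zero, mul_one]
    linarith [le_abs_self b.im, neg_abs_le b.im]
  have h1ne : s + b * Complex.I ≠ 0 := fun h => by rw [h] at h1; simp at h1
  have h2ne : s - b * Complex.I ≠ 0 := fun h => by rw [h] at h2; simp at h2
  have hfac : (s + b * Complex.I) * (s - b * Complex.I) = s^2 + b^2 := by
    linear_combination (-(b:ℂ)^2) * Complex.I_sq
  rw [← hfac]; exact mul_ne_zero h1ne h2ne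

lemma laplace_iter (b : ℂ) (n : ℕ) : ∀ s : ℂ, |b.im| < s.re →
    (∫ t in Set.Ioi (0:ℝ), Complex.exp (-s * t) *
      iterWeightedInt n (fun t => Complex.sin (b * t)) t)
    = 2^n * (Nat.factorial n) * b / (s^2 + b^2)^(n+1) := by
  induction n with
  | zero =>
    intro s hs
    show (∫ t in Set.Ioi (0:ℝ), Complex.exp (-s * t) * Complex.sin (b * t)) = _
    rw [laplace_sin b hs]
    norm_num
  | succ n ih =>
    intro s hs
    have hs0 : 0 < s.re := lt_of_le_of_lt (abs_nonneg _) hs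
    have hsne : s ≠ 0 := fun h => by rw [h] at hs0; simp at hs0
    have hd : 0 < s.re - |b.im| := by linarith
    have hε : 0 < (s.re - |b.im|) / 2 := by linarith
    have hne : s^2 + b^2 ≠ 0 := sq_add_sq_ne_zero b hs
    set Fn := iterWeightedInt n (fun t => Complex.sin (b * t)) with hFn
    -- Step 1 : differentiate under the integral sign
    have hstep1 := hasDerivAt_integral_of_dominated_loc_of_deriv_le
      (μ := volume.restrict (Set.Ioi (0:ℝ)))
      (F := fun (z : ℂ) (t : ℝ) => Complex.exp (-z * t) * Fn t)
      (F' := fun (z : ℂ) (t : ℝ) => -(t:ℂ) * (Complex.exp (-z * t) * Fn t))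
      (x₀ := s) (s := Metric.ball s ((s.re - |b.im|) / 2))
      (bound := fun t : ℝ => (1+t)^(2*n+1) * Real.exp (-((s.re - |b.im|)/2) * t))
      (Metric.ball_mem_nhds s hε)
      (Filter.Eventually.of_forall fun z =>
        ((Complex.continuous_exp.comp (continuous_const.mul Complex.continuous_ofReal)).mul
          (iter_cont b n)).aestronglyMeasurable)
      (by have h := iter_integrable b n 0 hs; simp only [pow_zero, one_mul] at h; exact h)
      (((Complex.continuous_ofReal.neg).mul
        ((Complex.continuous_exp.comp (continuous_const.mul Complex.continuous_ofReal)).mul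
          (iter_cont b n))).aestronglyMeasurable)
      ?hbound
      (aux_integrable (2*n+1) hε)
      ?hdiff
    case hbound =>
      rw [ae_restrict_iff' measurableSet_Ioi]
      refine Filter.Eventually.of_forall fun t ht => ?_
      intro z hz
      have ht0 : (0:ℝ) ≤ t := le_of_lt ht
      have hzre : s.re - (s.re - |b.im|)/2 ≤ z.re := by
        have h1 : dist z s < (s.re - |b.im|)/2 := Metric.mem_ball.1 hz
        have h2 : |(z - s).re| ≤ ‖z - s‖ := Complex.abs_re_le_norm _
        rw [Complex.dist_eq] at h1
        have := abs_le.1 (le_of_lt (lt_of_le_of_lt h2 h1))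
        simp only [Complex.sub_re] at this
        linarith [this.1]
      rw [norm_mul, norm_mul, norm_neg, Complex.norm_real, Real.norm_eq_abs,
        _root_.abs_of_nonneg ht0, norm_cexp_neg_mul]
      have hg := iter_growth b n t ht0
      calc t * (Real.exp (-z.re * t) * ‖Fn t‖)
          ≤ (1+t) * (Real.exp (-z.re * t) * ((1 + t) ^ (2 * n) * Real.exp (|b.im| * t))) := by
            have := Real.exp_pos (-z.re * t)
            gcongr
            linarith
        _ = (1+t)^(2*n+1) * (Real.exp (-z.re * t) * Real.exp (|b.im| * t)) := by ring
        _ = (1+t)^(2*n+1) * Real.exp ((|b.im| - z.re) * t) := by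
            rw [← Real.exp_add]; ring_nf
        _ ≤ (1+t)^(2*n+1) * Real.exp (-((s.re - |b.im|)/2) * t) := by
            have h1t : (0:ℝ) ≤ (1+t)^(2*n+1) := by positivity
            have harg : (|b.im| - z.re) * t ≤ (-((s.re - |b.im|)/2)) * t :=
              mul_le_mul_of_nonneg_right (by linarith) ht0
            exact mul_le_mul_of_nonneg_left (Real.exp_le_exp.2 harg) h1t
    case hdiff =>
      rw [ae_restrict_iff' measurableSet_Ioi]
      refine Filter.Eventually.of_forall fun t ht => ?_
      intro z hz
      have h := (((hasDerivAt_id z).neg.mul_const ((t:ℝ):ℂ)).cexp).mul_const (Fn t)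
      refine h.congr_deriv ?_
      simp only [Pi.neg_apply, id_eq]
      ring
    obtain ⟨hF'int, hderivL⟩ := hstep1
    -- Step 2 : the integral agrees with the rational function near s
    have hopen : IsOpen {z : ℂ | |b.im| < z.re} := isOpen_lt continuous_const Complex.continuous_re
    have hev : (fun z : ℂ => ∫ t in Set.Ioi (0:ℝ), Complex.exp (-z * t) * Fn t)
        =ᶠ[nhds s] (fun z : ℂ => 2^n * (Nat.factorial n) * b / (z^2 + b^2)^(n+1)) := by
      filter_upwards [hopen.mem_nhds hs] with z hz using ih z hz
    have hderivR : HasDerivAt (fun z : ℂ => 2^n * (Nat.factorial n) * b / (z^2 + b^2)^(n+1))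
        (∫ t in Set.Ioi (0:ℝ), -(t:ℂ) * (Complex.exp (-s * t) * Fn t)) s :=
      hderivL.congr_of_eventuallyEq hev.symm
    -- Step 3 : compute that derivative explicitly
    have hR : HasDerivAt (fun z : ℂ => 2^n * (Nat.factorial n) * b / (z^2 + b^2)^(n+1))
        (-(2^(n+1) * (Nat.factorial (n+1)) * b * s / (s^2 + b^2)^(n+2))) s := by
      have h1 : HasDerivAt (fun z : ℂ => z^2 + b^2) (2*s) s := by
        simpa using (hasDerivAt_pow 2 s).add_const (b^2)
      have h2 : HasDerivAt (fun z : ℂ => (z^2 + b^2)^(n+1))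
          (((n+1 : ℕ) : ℂ) * (s^2 + b^2)^n * (2*s)) s := by
        refine (h1.pow (n+1)).congr_deriv ?_
        simp
      have h3 := (hasDerivAt_const s ((2:ℂ)^n * (Nat.factorial n) * b)).fun_div h2
        (pow_ne_zero (n+1) hne)
      refine h3.congr_deriv ?_
      rw [zero_mul]
      field_simp
      push_cast [Nat.factorial_succ]
      ring
    have hkey : (∫ t in Set.Ioi (0:ℝ), (t:ℂ) * (Complex.exp (-s * t) * Fn t))
        = 2^(n+1) * (Nat.factorial (n+1)) * b * s / (s^2 + b^2)^(n+2) := by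
      have h := hderivR.unique hR
      have h2 : (∫ t in Set.Ioi (0:ℝ), -((t:ℂ) * (Complex.exp (-s * t) * Fn t)))
          = -(2^(n+1) * (Nat.factorial (n+1)) * b * s / (s^2 + b^2)^(n+2)) := by
        rw [← h]; congr 1; funext t; ring
      rw [MeasureTheory.integral_neg] at h2
      exact neg_injective h2
    -- Step 4 : integrate by parts
    have hFTC : ∀ t : ℝ, HasDerivAt (iterWeightedInt (n+1) (fun t => Complex.sin (b * t)))
        (Fn t * t) t := by
      intro t
      have hcont := (iter_cont b n).mul Complex.continuous_ofReal
      exact (hcont.integral_hasStrictDerivAt 0 t).hasDerivAt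
    have hg' : ∀ t : ℝ, HasDerivAt
        (fun t : ℝ => -Complex.exp (-s*t)/s * iterWeightedInt (n+1) (fun t => Complex.sin (b * t)) t)
        (Complex.exp (-s*t) * iterWeightedInt (n+1) (fun t => Complex.sin (b * t)) t
          + (-Complex.exp (-s*t)/s) * (Fn t * t)) t := by
      intro t
      have h4 : HasDerivAt (fun t : ℝ => -Complex.exp (-s*t)/s) (Complex.exp (-s*t)) t := by
        have := (hasDerivAt_cexp_neg_mul s t).neg.div_const s
        refine this.congr_deriv ?_
        rw [neg_mul, neg_neg, mul_div_cancel_left₀ _ hsne]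
      exact h4.mul (hFTC t)
    have hint1 : IntegrableOn (fun t : ℝ => Complex.exp (-s*t) *
        iterWeightedInt (n+1) (fun t => Complex.sin (b * t)) t) (Set.Ioi 0) := by
      simpa using iter_integrable b (n+1) 0 hs
    have hint2 : IntegrableOn (fun t : ℝ => (-Complex.exp (-s*t)/s) * (Fn t * t)) (Set.Ioi 0) := by
      have h := (iter_integrable b n 1 hs).const_mul (-(1:ℂ)/s)
      refine h.congr (Filter.Eventually.of_forall fun t => ?_)
      push_cast
      ring
    have htend : Tendsto (fun t : ℝ => -Complex.exp (-s*t)/s *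
        iterWeightedInt (n+1) (fun t => Complex.sin (b * t)) t) atTop (nhds 0) := by
      have hb := (aux_tendsto (2*(n+1)) hd).mul_const (1/‖s‖)
      rw [zero_mul] at hb
      refine squeeze_zero_norm' ?_ hb
      · filter_upwards [eventually_ge_atTop (0:ℝ)] with t ht0
        rw [norm_mul, norm_div, norm_neg, norm_cexp_neg_mul]
        have hg := iter_growth b (n+1) t ht0
        have hexp : Real.exp (-s.re * t) * Real.exp (|b.im| * t)
            = Real.exp (-(s.re - |b.im|) * t) := by rw [← Real.exp_add]; ring_nf
        calc Real.exp (-s.re * t) / ‖s‖ *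
              ‖iterWeightedInt (n+1) (fun t => Complex.sin (b * t)) t‖
            ≤ Real.exp (-s.re * t) / ‖s‖ * ((1 + t) ^ (2 * (n+1)) * Real.exp (|b.im| * t)) := by
              have hsn : 0 < ‖s‖ := norm_pos_iff.2 hsne
              gcongr
          _ = (1+t)^(2*(n+1)) * (Real.exp (-s.re * t) * Real.exp (|b.im| * t)) * (1/‖s‖) := by
              ring
          _ = (1+t)^(2*(n+1)) * Real.exp (-(s.re - |b.im|) * t) * (1/‖s‖) := by rw [hexp]
    have hIBP := integral_Ioi_of_hasDerivAt_of_tendsto (a := 0) (m := 0)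
      (f := fun t : ℝ => -Complex.exp (-s*t)/s *
        iterWeightedInt (n+1) (fun t => Complex.sin (b * t)) t)
      (f' := fun t : ℝ => Complex.exp (-s*t) *
        iterWeightedInt (n+1) (fun t => Complex.sin (b * t)) t
        + (-Complex.exp (-s*t)/s) * (Fn t * t))
      (((((Complex.continuous_exp.comp (continuous_const.mul
        Complex.continuous_ofReal)).neg.div_const s).mul
        (iter_cont b (n+1))).continuousWithinAt))
      (fun t _ => hg' t)
      (hint1.add hint2)
      htend
    have hG0 : iterWeightedInt (n+1) (fun t => Complex.sin (b * t)) 0 = 0 := by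
      show (∫ τ in (0:ℝ)..(0:ℝ), Fn τ * τ) = 0
      exact intervalIntegral.integral_same
    have h2nd : (∫ t in Set.Ioi (0:ℝ), (-Complex.exp (-s*t)/s) * (Fn t * t))
        = (-(1:ℂ)/s) * (2^(n+1) * (Nat.factorial (n+1)) * b * s / (s^2 + b^2)^(n+2)) := by
      rw [← hkey, ← MeasureTheory.integral_const_mul]
      refine integral_congr_ae (Filter.Eventually.of_forall fun t => ?_)
      ring
    rw [integral_add hint1 hint2, h2nd] at hIBP
    simp only [hG0, mul_zero, sub_zero, neg_zero] at hIBP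
    have hmain : (∫ t in Set.Ioi (0:ℝ), Complex.exp (-s*t) *
        iterWeightedInt (n+1) (fun t => Complex.sin (b * t)) t)
        = (1/s) * (2^(n+1) * (Nat.factorial (n+1)) * b * s / (s^2 + b^2)^(n+2)) := by
      linear_combination hIBP
    rw [hmain, show (n+1+1) = n+2 from rfl]
    field_simp

theorem laplace_of_iterated_integral_sin (m : ℕ) (hm : 1 ≤ m) (b : ℂ) (s : ℂ)
    (hs : |b.im| < s.re) :
    ∫ t in Set.Ioi (0 : ℝ),
        Complex.exp (-s * t) * iterWeightedInt (m - 1) (fun t => Complex.sin (b * t)) t =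
      2 ^ (m - 1) * (Nat.factorial (m - 1)) * b / (s ^ 2 + b ^ 2) ^ m := by
  obtain ⟨n, rfl⟩ : ∃ n, m = n + 1 := ⟨m - 1, (Nat.succ_pred_eq_of_pos hm).symm⟩
  simp only [Nat.add_sub_cancel]
  exact laplace_iter b n s hs
end

section
/- For any continuous function f : [a, ∞) → ℝ, integer m ≥ 1, and t ≥ a ≥ 0, the m-fold iterated weighted integral satisfies (∫_a^t · t dt)^m f(t) = ∫_a^t ((t² − τ²)^{m−1}/(2m−2)!!)·f(τ)·τ dτ, where (2m−2)!! denotes the double factorial. -/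
open MeasureTheory Nat

/-- The iterated weighted integral operator `g ↦ (∫ₐ^t g(τ) τ dτ)`, iterated `n` times. -/
noncomputable def iterWeightedIntFrom (a : ℝ) : ℕ → (ℝ → ℝ) → (ℝ → ℝ)
  | 0, g => g
  | n + 1, g => fun t => ∫ τ in a..t, iterWeightedIntFrom a n g τ * τ

section Aux

variable (f : ℝ → ℝ) (hf : Continuous f) (a : ℝ)

include hf

private lemma contAux (k : ℕ) : Continuous fun τ : ℝ => τ ^ k * f τ * τ :=
  ((continuous_pow k).mul hf).mul continuous_id

private lemma hasDerivAt_F (k : ℕ) (t : ℝ) :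
    HasDerivAt (fun u => ∫ τ in a..u, τ ^ k * f τ * τ) (t ^ k * f t * t) t :=
  intervalIntegral.integral_hasDerivAt_right ((contAux f hf k).intervalIntegrable a t)
    ((contAux f hf k).stronglyMeasurableAtFilter _ _) (contAux f hf k).continuousAt

private lemma contF (k : ℕ) : Continuous fun u : ℝ => ∫ τ in a..u, τ ^ k * f τ * τ :=
  Differentiable.continuous (fun u => (hasDerivAt_F f hf a k u).differentiableAt)

private lemma expand (n : ℕ) (t : ℝ) :
    ∫ τ in a..t, (t ^ 2 - τ ^ 2) ^ n * f τ * τ =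
      ∑ k ∈ Finset.range (n + 1),
        ((-1 : ℝ) ^ (k + n) * (n.choose k : ℝ) * t ^ (2 * k)) *
          ∫ τ in a..t, τ ^ (2 * (n - k)) * f τ * τ := by
  have h1 : ∀ τ : ℝ, (t ^ 2 - τ ^ 2) ^ n * f τ * τ =
      ∑ k ∈ Finset.range (n + 1),
        ((-1 : ℝ) ^ (k + n) * (n.choose k : ℝ) * t ^ (2 * k)) *
          (τ ^ (2 * (n - k)) * f τ * τ) := by
    intro τ
    rw [sub_pow, Finset.sum_mul, Finset.sum_mul]
    refine Finset.sum_congr rfl fun k _ => ?_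
    rw [mul_comm 2 k, pow_mul, mul_comm 2 (n - k), pow_mul]
    ring
  simp_rw [h1]
  rw [intervalIntegral.integral_finset_sum]
  · exact Finset.sum_congr rfl fun k _ => intervalIntegral.integral_const_mul _ _
  · intro k _
    exact (Continuous.intervalIntegrable (continuous_const.mul (contAux f hf _)) a t)

private lemma contI (n : ℕ) :
    Continuous fun u : ℝ => ∫ τ in a..u, (u ^ 2 - τ ^ 2) ^ n * f τ * τ := by
  have : (fun u : ℝ => ∫ τ in a..u, (u ^ 2 - τ ^ 2) ^ n * f τ * τ) =
      fun u => ∑ k ∈ Finset.range (n + 1),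
        ((-1 : ℝ) ^ (k + n) * (n.choose k : ℝ) * u ^ (2 * k)) *
          ∫ τ in a..u, τ ^ (2 * (n - k)) * f τ * τ :=
    funext fun u => expand f hf a n u
  rw [this]
  exact continuous_finset_sum _ fun k _ =>
    ((continuous_const.mul (continuous_pow _)).mul (contF f hf a _))

private lemma hasDerivAt_key (n : ℕ) (t : ℝ) :
    HasDerivAt (fun u => ∫ τ in a..u, (u ^ 2 - τ ^ 2) ^ (n + 1) * f τ * τ)
      ((2 * (n : ℝ) + 2) * t * ∫ τ in a..t, (t ^ 2 - τ ^ 2) ^ n * f τ * τ) t := by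
  have hfun : (fun u : ℝ => ∫ τ in a..u, (u ^ 2 - τ ^ 2) ^ (n + 1) * f τ * τ) =
      fun u => ∑ k ∈ Finset.range (n + 2),
        ((-1 : ℝ) ^ (k + (n + 1)) * ((n + 1).choose k : ℝ)) *
          (u ^ (2 * k) * ∫ τ in a..u, τ ^ (2 * (n + 1 - k)) * f τ * τ) := by
    funext u
    rw [expand f hf a (n + 1) u]
    exact Finset.sum_congr rfl fun k _ => by ring
  rw [hfun]
  have hder : HasDerivAt
      (fun u => ∑ k ∈ Finset.range (n + 2),
        ((-1 : ℝ) ^ (k + (n + 1)) * ((n + 1).choose k : ℝ)) *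
          (u ^ (2 * k) * ∫ τ in a..u, τ ^ (2 * (n + 1 - k)) * f τ * τ))
      (∑ k ∈ Finset.range (n + 2),
        ((-1 : ℝ) ^ (k + (n + 1)) * ((n + 1).choose k : ℝ)) *
          ((2 * k : ℝ) * t ^ (2 * k - 1) * (∫ τ in a..t, τ ^ (2 * (n + 1 - k)) * f τ * τ)
            + t ^ (2 * k) * (t ^ (2 * (n + 1 - k)) * f t * t))) t := by
    refine HasDerivAt.fun_sum fun k _ => ?_
    have h := ((hasDerivAt_pow (2 * k) t).fun_mul (hasDerivAt_F f hf a (2 * (n + 1 - k)) t)).const_mul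
      ((-1 : ℝ) ^ (k + (n + 1)) * ((n + 1).choose k : ℝ))
    refine h.congr_deriv ?_
    push_cast
    ring
  convert hder using 1
  -- now prove the value equality
  have hsplit : ∀ k ∈ Finset.range (n + 2),
      ((-1 : ℝ) ^ (k + (n + 1)) * ((n + 1).choose k : ℝ)) *
          ((2 * k : ℝ) * t ^ (2 * k - 1) * (∫ τ in a..t, τ ^ (2 * (n + 1 - k)) * f τ * τ)
            + t ^ (2 * k) * (t ^ (2 * (n + 1 - k)) * f t * t)) =
        ((-1 : ℝ) ^ (k + (n + 1)) * ((n + 1).choose k : ℝ)) *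
          ((2 * k : ℝ) * t ^ (2 * k - 1) * (∫ τ in a..t, τ ^ (2 * (n + 1 - k)) * f τ * τ))
        + ((-1 : ℝ) ^ (k + (n + 1)) * ((n + 1).choose k : ℝ)) * (t ^ (2 * (n + 1)) * f t * t) := by
    intro k hk
    have hkle : k ≤ n + 1 := by simpa [Nat.lt_succ_iff] using Finset.mem_range.mp hk
    have hpow : t ^ (2 * k) * t ^ (2 * (n + 1 - k)) = t ^ (2 * (n + 1)) := by
      rw [← pow_add]
      congr 1
      omega
    rw [mul_add]
    congr 1
    rw [← hpow]
    ring
  rw [Finset.sum_congr rfl hsplit, Finset.sum_add_distrib]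
  have hzero : (∑ k ∈ Finset.range (n + 2),
      ((-1 : ℝ) ^ (k + (n + 1)) * ((n + 1).choose k : ℝ)) * (t ^ (2 * (n + 1)) * f t * t)) = 0 := by
    rw [← Finset.sum_mul]
    have hint : (∑ k ∈ Finset.range (n + 2), ((-1 : ℤ) ^ k * ((n + 1).choose k : ℤ))) = 0 :=
      Int.alternating_sum_range_choose_of_ne (Nat.succ_ne_zero n)
    have hre : (∑ k ∈ Finset.range (n + 2), ((-1 : ℝ) ^ k * ((n + 1).choose k : ℝ))) = 0 := by
      exact_mod_cast congrArg (Int.cast : ℤ → ℝ) hint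
    have : (∑ k ∈ Finset.range (n + 2), ((-1 : ℝ) ^ (k + (n + 1)) * ((n + 1).choose k : ℝ)))
        = (-1 : ℝ) ^ (n + 1) * ∑ k ∈ Finset.range (n + 2), ((-1 : ℝ) ^ k * ((n + 1).choose k : ℝ)) := by
      rw [Finset.mul_sum]
      exact Finset.sum_congr rfl fun k _ => by rw [pow_add]; ring
    rw [this, hre, mul_zero, zero_mul]
  rw [hzero, add_zero]
  -- remaining: main sum equals target
  rw [expand f hf a n t, Finset.mul_sum]
  rw [Finset.sum_range_succ' (fun k =>
    ((-1 : ℝ) ^ (k + (n + 1)) * ((n + 1).choose k : ℝ)) *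
      ((2 * k : ℝ) * t ^ (2 * k - 1) * (∫ τ in a..t, τ ^ (2 * (n + 1 - k)) * f τ * τ))) (n + 1)]
  simp only [Nat.cast_zero, mul_zero, zero_mul, mul_zero, add_zero, Nat.choose_zero_right]
  refine (Finset.sum_congr rfl fun j hj => ?_).symm
  have hC : ((n + 1).choose (j + 1) : ℝ) * ((j : ℝ) + 1) = ((n : ℝ) + 1) * (n.choose j : ℝ) := by
    have := Nat.add_one_mul_choose_eq n j
    have : (n + 1) * n.choose j = (n + 1).choose (j + 1) * (j + 1) := by
      simpa [Nat.succ_eq_add_one] using this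
    exact_mod_cast (congrArg (Nat.cast : ℕ → ℝ) this).symm
  have hsign : (-1 : ℝ) ^ (j + 1 + (n + 1)) = (-1 : ℝ) ^ (j + n) := by
    have : j + 1 + (n + 1) = (j + n) + 2 := by omega
    rw [this, pow_add]
    norm_num
  have hidx : n + 1 - (j + 1) = n - j := by omega
  have hexp : 2 * (j + 1) - 1 = 2 * j + 1 := by omega
  rw [hsign, hidx, hexp]
  have hpow : t ^ (2 * j + 1) = t ^ (2 * j) * t := pow_succ t (2 * j)
  rw [hpow]
  push_cast
  linear_combination (2 * (-1 : ℝ) ^ (j + n) * t ^ (2 * j) * t *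
    (∫ τ in a..t, τ ^ (2 * (n - j)) * f τ * τ)) * hC

private lemma hasDerivAt_key' (n : ℕ) (t : ℝ) :
    HasDerivAt (fun u => ∫ τ in a..u, (u ^ 2 - τ ^ 2) ^ (n + 1) * f τ * τ)
      ((2 * (n : ℝ) + 2) * t * ∫ τ in a..t, (t ^ 2 - τ ^ 2) ^ n * f τ * τ) t :=
  hasDerivAt_key f hf a n t

private lemma main_aux (n : ℕ) : ∀ t : ℝ,
    iterWeightedIntFrom a (n + 1) f t =
      (((2 * n).doubleFactorial : ℝ))⁻¹ * ∫ τ in a..t, (t ^ 2 - τ ^ 2) ^ n * f τ * τ := by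
  induction n with
  | zero =>
    intro t
    simp only [iterWeightedIntFrom, Nat.mul_zero, Nat.doubleFactorial, Nat.cast_one, inv_one,
      one_mul, pow_zero]
  | succ n ih =>
    intro t
    set d : ℝ := ((2 * n).doubleFactorial : ℝ) with hdd
    have hd : d ≠ 0 := Nat.cast_ne_zero.mpr (Nat.doubleFactorial_pos (2 * n)).ne'
    have hD : ((2 * (n + 1)).doubleFactorial : ℝ) = (2 * (n : ℝ) + 2) * d := by
      have h2 : 2 * (n + 1) = 2 * n + 2 := by ring
      rw [h2, Nat.doubleFactorial_add_two, hdd]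
      push_cast
      ring
    have hrecdef : iterWeightedIntFrom a (n + 1 + 1) f t =
        ∫ s in a..t, iterWeightedIntFrom a (n + 1) f s * s := rfl
    rw [hrecdef]
    have hintegrand : ∀ s : ℝ, iterWeightedIntFrom a (n + 1) f s * s =
        d⁻¹ * ((∫ τ in a..s, (s ^ 2 - τ ^ 2) ^ n * f τ * τ) * s) := fun s => by
      rw [ih s]; ring
    simp_rw [hintegrand]
    rw [intervalIntegral.integral_const_mul]
    set I1 : ℝ → ℝ := fun u => ∫ τ in a..u, (u ^ 2 - τ ^ 2) ^ (n + 1) * f τ * τ with hI1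
    set J : ℝ → ℝ := fun u => ∫ s in a..u, (∫ τ in a..s, (s ^ 2 - τ ^ 2) ^ n * f τ * τ) * s
      with hJdef
    have hg : Continuous fun s : ℝ => (∫ τ in a..s, (s ^ 2 - τ ^ 2) ^ n * f τ * τ) * s :=
      (contI f hf a n).mul continuous_id
    have hJd : ∀ u : ℝ, HasDerivAt J ((∫ τ in a..u, (u ^ 2 - τ ^ 2) ^ n * f τ * τ) * u) u :=
      fun u => intervalIntegral.integral_hasDerivAt_right (hg.intervalIntegrable a u)
        (hg.stronglyMeasurableAtFilter _ _) hg.continuousAt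
    have hPhi : ∀ u : ℝ, HasDerivAt (fun u => (2 * (n : ℝ) + 2) * J u - I1 u) 0 u := by
      intro u
      have h := ((hJd u).const_mul (2 * (n : ℝ) + 2)).fun_sub (hasDerivAt_key f hf a n u)
      refine h.congr_deriv ?_
      ring
    have hconst : ∀ u : ℝ, (2 * (n : ℝ) + 2) * J u - I1 u = 0 := by
      intro u
      have hdiff : Differentiable ℝ (fun u => (2 * (n : ℝ) + 2) * J u - I1 u) :=
        fun x => (hPhi x).differentiableAt
      have h0 := is_const_of_deriv_eq_zero hdiff (fun x => (hPhi x).deriv) u a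
      have hJa : J a = 0 := by rw [hJdef]; exact intervalIntegral.integral_same
      have hIa : I1 a = 0 := by rw [hI1]; exact intervalIntegral.integral_same
      rw [hJa, hIa] at h0
      simpa using h0
    have hIJ : I1 t = (2 * (n : ℝ) + 2) * J t := by
      have := hconst t
      linarith
    show d⁻¹ * J t = (((2 * (n + 1)).doubleFactorial : ℝ))⁻¹ * I1 t
    rw [hIJ, hD]
    have h2n : (2 * (n : ℝ) + 2) ≠ 0 := by positivity
    field_simp

end Aux

theorem iterated_weighted_integral_formula (f : ℝ → ℝ) (hf : Continuous f)
    (m : ℕ) (hm : 1 ≤ m) (a t : ℝ) (ha : 0 ≤ a) (hat : a ≤ t) :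
    iterWeightedIntFrom a m f t =
      ∫ τ in a..t, ((t ^ 2 - τ ^ 2) ^ (m - 1) / (Nat.doubleFactorial (2 * m - 2) : ℝ))
        * f τ * τ := by
  obtain ⟨n, rfl⟩ := Nat.exists_eq_add_of_le hm
  have h1 : 1 + n - 1 = n := by omega
  have h2 : 2 * (1 + n) - 2 = 2 * n := by omega
  have h3 : 1 + n = n + 1 := by omega
  rw [h1, h2, h3, main_aux f hf a n t]
  have : ∀ τ : ℝ, (t ^ 2 - τ ^ 2) ^ n / ((2 * n).doubleFactorial : ℝ) * f τ * τ =
      (((2 * n).doubleFactorial : ℝ))⁻¹ * ((t ^ 2 - τ ^ 2) ^ n * f τ * τ) := fun τ => by ring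
  simp_rw [this]
  rw [intervalIntegral.integral_const_mul]
end

section
/- For m ≥ 2 and r, k ≥ 0 integers, the identity d^{2m−1−2k−r}/dt^{2m−1−2k−r} [∫₀^t ((t² − τ²)^{m−2} τ /((2m−2)!!(2m−4)!!))·(τ^{2i+1}/(2i+1)!) dτ] = C(m−1+i, i)·t^{2k+2i+r}/(2k+2i+r)! holds whenever 2m−1−2k−r ≥ 0, where C denotes the binomial coefficient. -/
open MeasureTheory Nat

private lemma aux_integral : ∀ (n : ℕ) (i : ℕ) (t : ℝ),
    (∫ τ in (0:ℝ)..t, (t ^ 2 - τ ^ 2) ^ n * τ ^ (2 * i + 2)) =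
    (((2 * n)‼ : ℝ) * ((2 * i + 1)‼ : ℝ) / ((2 * n + 2 * i + 3)‼ : ℝ)) *
      t ^ (2 * n + 2 * i + 3) := by
  intro n
  induction n with
  | zero =>
    intro i t
    have h3 : (2 * i + 3)‼ = (2 * i + 3) * (2 * i + 1)‼ := Nat.doubleFactorial_add_two _
    simp only [Nat.zero_eq, Nat.mul_zero, pow_zero, one_mul, Nat.zero_add]
    rw [intervalIntegral.integral_congr (g := fun τ : ℝ => τ ^ (2 * i + 2))
      (fun τ _ => by ring)]
    rw [integral_pow]
    have hz : ((2 * i + 1)‼ : ℝ) ≠ 0 := by positivity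
    have hz3 : ((2 * i + 3) : ℝ) ≠ 0 := by positivity
    rw [h3, show (Nat.doubleFactorial 0) = 1 from rfl]
    push_cast
    field_simp
    ring
  | succ n ih =>
    intro i t
    have hcont1 : Continuous fun τ : ℝ => (t ^ 2 - τ ^ 2) ^ n * τ ^ (2 * i + 2) := by
      continuity
    have hcont2 : Continuous fun τ : ℝ => (t ^ 2 - τ ^ 2) ^ n * τ ^ (2 * (i + 1) + 2) := by
      continuity
    rw [intervalIntegral.integral_congr
      (g := fun τ : ℝ => t ^ 2 * ((t ^ 2 - τ ^ 2) ^ n * τ ^ (2 * i + 2)) -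
        (t ^ 2 - τ ^ 2) ^ n * τ ^ (2 * (i + 1) + 2)) (fun τ _ => by ring)]
    rw [intervalIntegral.integral_sub (Continuous.intervalIntegrable (u := fun τ : ℝ => t ^ 2 * ((t ^ 2 - τ ^ 2) ^ n * τ ^ (2 * i + 2))) (continuous_const.mul hcont1) _ _)
      (hcont2.intervalIntegrable _ _), intervalIntegral.integral_const_mul, ih, ih]
    have e1 : 2 * (n + 1) = 2 * n + 2 := by ring
    have e2 : 2 * (i + 1) + 1 = 2 * i + 1 + 2 := by ring
    have e3 : 2 * n + 2 * (i + 1) + 3 = 2 * n + 2 * i + 3 + 2 := by ring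
    have e4 : 2 * n + 2 + 2 * i + 3 = 2 * n + 2 * i + 3 + 2 := by ring
    rw [e1, e2, e3, e4, Nat.doubleFactorial_add_two (2 * n),
      Nat.doubleFactorial_add_two (2 * i + 1),
      Nat.doubleFactorial_add_two (2 * n + 2 * i + 3)]
    have hz1 : ((2 * n + 2 * i + 3)‼ : ℝ) ≠ 0 := by positivity
    have hz2 : ((2 * n + 2 * i + 3 + 2) : ℝ) ≠ 0 := by positivity
    push_cast
    field_simp
    ring

private lemma aux_iteratedDeriv (c : ℝ) (N : ℕ) : ∀ n : ℕ,
    iteratedDeriv n (fun t : ℝ => c * t ^ N) =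
      fun t => c * (N.descFactorial n : ℝ) * t ^ (N - n) := by
  intro n
  induction n with
  | zero => simp
  | succ n ih =>
    rw [iteratedDeriv_succ, ih]
    funext t
    rw [deriv_const_mul _ (differentiable_pow _).differentiableAt, deriv_pow_field,
      Nat.descFactorial_succ, Nat.sub_sub]
    push_cast
    ring

private lemma aux_nat (m i : ℕ) :
    (2 * i + 1)‼ * (2 * m + 2 * i + 3)! =
      Nat.choose (m + 1 + i) i * (2 * m + 2)‼ * (2 * i + 1)! * (2 * m + 2 * i + 3)‼ := by
  have h1 : (2 * m + 2 * i + 3)! = (2 * m + 2 * i + 3)‼ * (2 * m + 2 * i + 2)‼ := by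
    rw [show 2 * m + 2 * i + 3 = (2 * m + 2 * i + 2) + 1 from by ring]
    exact Nat.factorial_eq_mul_doubleFactorial _
  have h2 : (2 * i + 1)! = (2 * i + 1)‼ * (2 * i)‼ := by
    rw [show 2 * i + 1 = (2 * i) + 1 from by ring]
    exact Nat.factorial_eq_mul_doubleFactorial _
  have h3 : (2 * m + 2 * i + 2)‼ = 2 ^ (m + i + 1) * (m + i + 1)! := by
    rw [show 2 * m + 2 * i + 2 = 2 * (m + i + 1) from by ring]
    exact Nat.doubleFactorial_two_mul _
  have h4 : (2 * m + 2)‼ = 2 ^ (m + 1) * (m + 1)! := by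
    rw [show 2 * m + 2 = 2 * (m + 1) from by ring]
    exact Nat.doubleFactorial_two_mul _
  have h5 : (2 * i)‼ = 2 ^ i * i ! := Nat.doubleFactorial_two_mul _
  have h6 : Nat.choose (m + 1 + i) i * i ! * (m + 1)! = (m + 1 + i)! := by
    have := Nat.choose_mul_factorial_mul_factorial (show i ≤ m + 1 + i by omega)
    rwa [show m + 1 + i - i = m + 1 from by omega] at this
  have h7 : (m + i + 1)! = (m + 1 + i)! := by rw [show m + i + 1 = m + 1 + i from by ring]
  rw [h1, h2, h3, h4, h5, h7, ← h6, show m + i + 1 = m + 1 + i from by ring]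
  ring

theorem iterated_deriv_integral_identity (m i k r : ℕ) (hm : 2 ≤ m)
    (hr : 2 * k + r ≤ 2 * m - 1) :
    ∀ t : ℝ,
      iteratedDeriv (2 * m - 1 - 2 * k - r)
        (fun t : ℝ =>
          ∫ τ in (0 : ℝ)..t,
            ((t ^ 2 - τ ^ 2) ^ (m - 2) * τ /
                ((Nat.doubleFactorial (2 * m - 2) : ℝ) * (Nat.doubleFactorial (2 * m - 4) : ℝ)))
              * (τ ^ (2 * i + 1) / (Nat.factorial (2 * i + 1) : ℝ))) t =
      (Nat.choose (m - 1 + i) i : ℝ) * t ^ (2 * k + 2 * i + r) /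
        (Nat.factorial (2 * k + 2 * i + r) : ℝ) := by
  obtain ⟨m', rfl⟩ : ∃ m', m = m' + 2 := ⟨m - 2, by omega⟩
  intro t
  have hsub2 : 2 * (m' + 2) - 2 = 2 * m' + 2 := by omega
  have hsub4 : 2 * (m' + 2) - 4 = 2 * m' := by omega
  have hsubm : m' + 2 - 2 = m' := by omega
  have hsub1 : m' + 2 - 1 + i = m' + 1 + i := by omega
  set D : ℝ := ((2 * m' + 2)‼ : ℝ) * ((2 * m')‼ : ℝ) with hD
  have hDpos : (0 : ℝ) < D := by positivity
  set K : ℝ := (D * ((2 * i + 1)! : ℝ))⁻¹ *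
    (((2 * m')‼ : ℝ) * ((2 * i + 1)‼ : ℝ) / ((2 * m' + 2 * i + 3)‼ : ℝ)) with hK
  have hfun : (fun t : ℝ =>
      ∫ τ in (0 : ℝ)..t,
        ((t ^ 2 - τ ^ 2) ^ (m' + 2 - 2) * τ /
            ((Nat.doubleFactorial (2 * (m' + 2) - 2) : ℝ) *
              (Nat.doubleFactorial (2 * (m' + 2) - 4) : ℝ)))
          * (τ ^ (2 * i + 1) / (Nat.factorial (2 * i + 1) : ℝ))) =
      fun t => K * t ^ (2 * m' + 2 * i + 3) := by
    funext s
    rw [hsub2, hsub4, hsubm]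
    have : (∫ τ in (0 : ℝ)..s,
        ((s ^ 2 - τ ^ 2) ^ m' * τ / D) * (τ ^ (2 * i + 1) / ((2 * i + 1)! : ℝ))) =
        ∫ τ in (0 : ℝ)..s,
          (D * ((2 * i + 1)! : ℝ))⁻¹ * ((s ^ 2 - τ ^ 2) ^ m' * τ ^ (2 * i + 2)) := by
      apply intervalIntegral.integral_congr
      intro τ _
      show (s ^ 2 - τ ^ 2) ^ m' * τ / D * (τ ^ (2 * i + 1) / ((2 * i + 1)! : ℝ)) =
        (D * ((2 * i + 1)! : ℝ))⁻¹ * ((s ^ 2 - τ ^ 2) ^ m' * τ ^ (2 * i + 2))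
      have hτ : τ ^ (2 * i + 2) = τ * τ ^ (2 * i + 1) := by ring
      rw [hτ]
      field_simp
    rw [this, intervalIntegral.integral_const_mul, aux_integral, hK]
    ring
  rw [hfun, aux_iteratedDeriv, hsub1]
  set nn : ℕ := 2 * (m' + 2) - 1 - 2 * k - r with hnn
  have hnn' : nn = 2 * m' + 3 - 2 * k - r := by omega
  have hle : nn ≤ 2 * m' + 2 * i + 3 := by omega
  have hexp : 2 * m' + 2 * i + 3 - nn = 2 * k + 2 * i + r := by omega
  have hdf := Nat.factorial_mul_descFactorial hle
  rw [hexp] at hdf ⊢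
  -- goal: K * descFactorial * t ^ (2k+2i+r) = choose * t^(2k+2i+r) / (2k+2i+r)!
  have hKdf : K * ((2 * m' + 2 * i + 3).descFactorial nn : ℝ) =
      (Nat.choose (m' + 1 + i) i : ℝ) / ((2 * k + 2 * i + r)! : ℝ) := by
    have hfz : ((2 * k + 2 * i + r)! : ℝ) ≠ 0 := by positivity
    have hKN : K * ((2 * m' + 2 * i + 3)! : ℝ) = (Nat.choose (m' + 1 + i) i : ℝ) := by
      rw [hK, hD]
      have h1 : ((2 * m' + 2)‼ : ℝ) ≠ 0 := by positivity
      have h2 : ((2 * m')‼ : ℝ) ≠ 0 := by positivity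
      have h3 : ((2 * i + 1)! : ℝ) ≠ 0 := by positivity
      have h4 : ((2 * m' + 2 * i + 3)‼ : ℝ) ≠ 0 := by positivity
      have e5 : ((2 * m' + 2)‼ : ℕ) = (2 * m' + 2) * (2 * m')‼ :=
        Nat.doubleFactorial_add_two (2 * m')
      have e6 : ((2 * m' + 2 * i + 3)‼ : ℕ) = (2 * m' + 2 * i + 3) * (2 * m' + 2 * i + 1)‼ := by
        rw [show 2 * m' + 2 * i + 3 = (2 * m' + 2 * i + 1) + 2 from by ring]
        exact Nat.doubleFactorial_add_two _
      have e5R : ((2 * m' + 2)‼ : ℝ) = ((2 * m' + 2 : ℕ) : ℝ) * ((2 * m')‼ : ℝ) := by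
        exact_mod_cast congrArg (Nat.cast : ℕ → ℝ) e5
      have e6R : ((2 * m' + 2 * i + 3)‼ : ℝ) =
          ((2 * m' + 2 * i + 3 : ℕ) : ℝ) * ((2 * m' + 2 * i + 1)‼ : ℝ) := by
        exact_mod_cast congrArg (Nat.cast : ℕ → ℝ) e6
      have hcast : ((2 * i + 1)‼ : ℝ) * ((2 * m' + 2 * i + 3)! : ℝ) =
          ((m' + 1 + i).choose i : ℝ) * ((2 * m' + 2)‼ : ℝ) * ((2 * i + 1)! : ℝ) *
            ((2 * m' + 2 * i + 3)‼ : ℝ) := by exact_mod_cast aux_nat m' i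
      rw [e5R, e6R] at hcast
      field_simp
      push_cast at hcast ⊢
      rw [e5R, e6R]
      push_cast
      linear_combination hcast
    have := congrArg (· / ((2 * k + 2 * i + r)! : ℝ)) hKN
    rw [← this, ← hdf]
    push_cast
    field_simp
  rw [hKdf]
  ring
end
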